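/- For every integer n ≥ 18 and real p ≥ 2, with f(x,y,p) = (x^p+y^p)^(1/p), one has √n · f(4,n−2,p) · (n·f(4,n−2,p)² − 4·f(2,n−1,p)² − (n−5)·f(1,n−1,p)²) + f(2,2,p) · ((n−5)·f(1,n−1,p)² − n·f(4,n−2,p)²) < 0. -/

import Mathlib

lemma aux_nn (q : ℝ) (hq : 1 ≤ q) (a b : ℝ) (ha : 0 ≤ a) (hb : 0 ≤ b) :
    a ^ q + b ^ q ≤ (a + b) ^ q := by
  lift a to NNReal using ha
  lift b to NNReal using hb
  exact_mod_cast NNReal.add_rpow_le_rpow_add a b hq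

lemma aux_lb (p : ℝ) (hp : 2 ≤ p) (x y : ℝ) (hx : 0 ≤ x) (hy : 0 ≤ y) :
    y ≤ (x ^ p + y ^ p) ^ (1 / p) := by
  have hp0 : 0 < p := by linarith
  have h1 : y = (y ^ p) ^ (1 / p) := by
    rw [← Real.rpow_mul hy, mul_one_div, div_self hp0.ne', Real.rpow_one]
  calc y = (y ^ p) ^ (1 / p) := h1
    _ ≤ (x ^ p + y ^ p) ^ (1 / p) :=
      Real.rpow_le_rpow (Real.rpow_nonneg hy p)
        (le_add_of_nonneg_left (Real.rpow_nonneg hx p)) (by positivity)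

lemma aux_ub (p : ℝ) (hp : 2 ≤ p) (x y : ℝ) (hx : 0 ≤ x) (hy : 0 ≤ y) :
    ((x ^ p + y ^ p) ^ (1 / p)) ^ 2 ≤ x ^ 2 + y ^ 2 := by
  have hp0 : 0 < p := by linarith
  have e1 : x ^ p = (x ^ 2) ^ (p / 2) := by
    rw [← Real.rpow_natCast x 2, ← Real.rpow_mul hx]
    congr 1
    push_cast; ring
  have e2 : y ^ p = (y ^ 2) ^ (p / 2) := by
    rw [← Real.rpow_natCast y 2, ← Real.rpow_mul hy]
    congr 1
    push_cast; ring
  have h1 : x ^ p + y ^ p ≤ (x ^ 2 + y ^ 2) ^ (p / 2) := by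
    rw [e1, e2]
    exact aux_nn (p / 2) (by linarith) _ _ (by positivity) (by positivity)
  have h2 : (x ^ p + y ^ p) ^ (1 / p) ≤ ((x ^ 2 + y ^ 2) ^ (p / 2)) ^ (1 / p) :=
    Real.rpow_le_rpow (by positivity) h1 (by positivity)
  have h3 : ((x ^ 2 + y ^ 2) ^ (p / 2)) ^ (1 / p) = (x ^ 2 + y ^ 2) ^ ((1 : ℝ) / 2) := by
    rw [← Real.rpow_mul (by positivity)]
    congr 1
    field_simp
  rw [h3] at h2
  have hnn : 0 ≤ (x ^ p + y ^ p) ^ (1 / p) := Real.rpow_nonneg (by positivity) _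
  calc ((x ^ p + y ^ p) ^ (1 / p)) ^ 2 ≤ ((x ^ 2 + y ^ 2) ^ ((1 : ℝ) / 2)) ^ 2 :=
        pow_le_pow_left₀ hnn h2 2
    _ = x ^ 2 + y ^ 2 := by
        rw [← Real.rpow_natCast ((x ^ 2 + y ^ 2) ^ ((1 : ℝ) / 2)) 2,
          ← Real.rpow_mul (by positivity)]
        norm_num

theorem stmt_16 (n : ℕ) (hn : 18 ≤ n) (p : ℝ) (hp : 2 ≤ p) :
    Real.sqrt n * ((4 : ℝ) ^ p + ((n : ℝ) - 2) ^ p) ^ (1 / p) *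
        ((n : ℝ) * (((4 : ℝ) ^ p + ((n : ℝ) - 2) ^ p) ^ (1 / p)) ^ 2 -
          4 * (((2 : ℝ) ^ p + ((n : ℝ) - 1) ^ p) ^ (1 / p)) ^ 2 -
          ((n : ℝ) - 5) * (((1 : ℝ) + ((n : ℝ) - 1) ^ p) ^ (1 / p)) ^ 2) +
      ((2 : ℝ) ^ p + 2 ^ p) ^ (1 / p) *
        (((n : ℝ) - 5) * (((1 : ℝ) + ((n : ℝ) - 1) ^ p) ^ (1 / p)) ^ 2 -
          (n : ℝ) * (((4 : ℝ) ^ p + ((n : ℝ) - 2) ^ p) ^ (1 / p)) ^ 2) < 0 := by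
  have hn' : (18 : ℝ) ≤ (n : ℝ) := by exact_mod_cast hn
  set A : ℝ := ((4 : ℝ) ^ p + ((n : ℝ) - 2) ^ p) ^ (1 / p) with hA
  set B : ℝ := ((2 : ℝ) ^ p + ((n : ℝ) - 1) ^ p) ^ (1 / p) with hB
  set C : ℝ := ((1 : ℝ) + ((n : ℝ) - 1) ^ p) ^ (1 / p) with hC
  set D : ℝ := ((2 : ℝ) ^ p + 2 ^ p) ^ (1 / p) with hD
  set s : ℝ := Real.sqrt n with hs
  have hA1 : (n : ℝ) - 2 ≤ A := aux_lb p hp 4 _ (by norm_num) (by linarith)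
  have hA2 : A ^ 2 ≤ 16 + ((n : ℝ) - 2) ^ 2 := by
    have h := aux_ub p hp 4 ((n : ℝ) - 2) (by norm_num) (by linarith)
    rw [← hA] at h
    nlinarith [h]
  have hB1 : (n : ℝ) - 1 ≤ B := aux_lb p hp 2 _ (by norm_num) (by linarith)
  have hC1 : (n : ℝ) - 1 ≤ C := by
    have h := aux_lb p hp 1 ((n : ℝ) - 1) (by norm_num) (by linarith)
    rwa [Real.one_rpow] at h
  have hC2 : C ^ 2 ≤ 1 + ((n : ℝ) - 1) ^ 2 := by
    have h := aux_ub p hp 1 ((n : ℝ) - 1) (by norm_num) (by linarith)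
    rw [Real.one_rpow, ← hC] at h
    nlinarith [h]
  have hD0 : 0 < D := Real.rpow_pos_of_pos (by positivity) _
  have hD2 : D ^ 2 ≤ 8 := by
    have h := aux_ub p hp 2 2 (by norm_num) (by norm_num)
    rw [← hD] at h
    nlinarith [h]
  have hs2 : s ^ 2 = (n : ℝ) := Real.sq_sqrt (by positivity)
  have hs4 : (4 : ℝ) ≤ s := by
    rw [hs, show (4 : ℝ) = Real.sqrt 16 by
      rw [show (16 : ℝ) = 4 ^ 2 by norm_num, Real.sqrt_sq (by norm_num)]]
    exact Real.sqrt_le_sqrt (by linarith)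
  have hA0 : (0 : ℝ) < A := by linarith
  have hB0 : (0 : ℝ) < B := by linarith
  have hsA0 : (0 : ℝ) < s * A := by positivity
  have hD3 : D ≤ 3 := by nlinarith [sq_nonneg (D - 3)]
  have hsAD : D ≤ s * A := by
    have h64 : 4 * ((n : ℝ) - 2) ≤ s * A :=
      mul_le_mul hs4 hA1 (by linarith) (by linarith)
    linarith
  have hC1' : ((n : ℝ) - 1) ^ 2 ≤ C ^ 2 := pow_le_pow_left₀ (by linarith) hC1 2
  have hB1' : ((n : ℝ) - 1) ^ 2 ≤ B ^ 2 := pow_le_pow_left₀ (by linarith) hB1 2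
  have key1 : (n : ℝ) * A ^ 2 - ((n : ℝ) - 5) * C ^ 2 ≤
      3 * (n : ℝ) ^ 2 + 9 * (n : ℝ) + 5 := by
    have t1 : (n : ℝ) * A ^ 2 ≤ (n : ℝ) * (16 + ((n : ℝ) - 2) ^ 2) :=
      mul_le_mul_of_nonneg_left hA2 (by linarith)
    have t2 : ((n : ℝ) - 5) * ((n : ℝ) - 1) ^ 2 ≤ ((n : ℝ) - 5) * C ^ 2 :=
      mul_le_mul_of_nonneg_left hC1' (by linarith)
    linarith [t1, t2]
  have key2 : 3 * (n : ℝ) ^ 2 + 9 * (n : ℝ) + 5 < 4 * ((n : ℝ) - 1) ^ 2 := by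
    nlinarith [sq_nonneg ((n : ℝ) - 18)]
  have expr_eq : s * A * ((n : ℝ) * A ^ 2 - 4 * B ^ 2 - ((n : ℝ) - 5) * C ^ 2) +
      D * (((n : ℝ) - 5) * C ^ 2 - (n : ℝ) * A ^ 2) =
      (s * A - D) * ((n : ℝ) * A ^ 2 - ((n : ℝ) - 5) * C ^ 2) - 4 * (s * A) * B ^ 2 := by
    ring
  rw [expr_eq]
  have hpos : 0 < 4 * (s * A) * B ^ 2 := by positivity
  rcases le_or_gt ((n : ℝ) * A ^ 2 - ((n : ℝ) - 5) * C ^ 2) 0 with hX0 | hX0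
  · have h0 : (s * A - D) * ((n : ℝ) * A ^ 2 - ((n : ℝ) - 5) * C ^ 2) ≤ 0 :=
      mul_nonpos_of_nonneg_of_nonpos (by linarith) hX0
    linarith
  · have c1 : (s * A - D) * ((n : ℝ) * A ^ 2 - ((n : ℝ) - 5) * C ^ 2) ≤
        (s * A) * ((n : ℝ) * A ^ 2 - ((n : ℝ) - 5) * C ^ 2) :=
      mul_le_mul_of_nonneg_right (by linarith) hX0.le
    have c2 : (s * A) * ((n : ℝ) * A ^ 2 - ((n : ℝ) - 5) * C ^ 2) ≤
        (s * A) * (3 * (n : ℝ) ^ 2 + 9 * (n : ℝ) + 5) :=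
      mul_le_mul_of_nonneg_left key1 hsA0.le
    have c3 : (s * A) * (3 * (n : ℝ) ^ 2 + 9 * (n : ℝ) + 5) < (s * A) * (4 * B ^ 2) :=
      mul_lt_mul_of_pos_left (by linarith) hsA0
    have c4 : (s * A) * (4 * B ^ 2) = 4 * (s * A) * B ^ 2 := by ring
    linarith
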